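/- If a positive real sequence x_k satisfies x_k = α k + β ln k + C + o(1) as k → ∞ with α ≠ 0, then y_k = 1/x_k satisfies k^2 * (y_k - 1/(α k)) + (β/α^2) * ln k → -C/α^2. -/

import Mathlib

open Filter

theorem stmt_17 (α β C : ℝ) (hα : α ≠ 0) (x y : ℕ → ℝ)
    (hpos : ∀ k, 0 < x k)
    (hy : ∀ k, y k = 1 / x k)
    (hx : Tendsto (fun k : ℕ => x k - α * (k : ℝ) - β * Real.log (k : ℝ)) atTop (nhds C)) :
    Tendsto (fun k : ℕ =>
        (k : ℝ) ^ 2 * (y k - 1 / (α * (k : ℝ))) + (β / α ^ 2) * Real.log (k : ℝ))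
      atTop (nhds (-C / α ^ 2)) := by
  set e : ℕ → ℝ := fun k => x k - α * (k : ℝ) - β * Real.log (k : ℝ) with he
  set L : ℕ → ℝ := fun k => Real.log (k : ℝ) with hL
  have hcast : Tendsto (fun k : ℕ => (k : ℝ)) atTop atTop := tendsto_natCast_atTop_atTop
  -- log k ^ n / k → 0
  have hlog : ∀ n : ℕ, Tendsto (fun k : ℕ => L k ^ n / (k : ℝ)) atTop (nhds 0) := by
    intro n
    have := (Real.tendsto_pow_log_div_mul_add_atTop 1 0 n one_ne_zero).comp hcast
    simpa [Function.comp_def] using this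
  have hLk : Tendsto (fun k : ℕ => L k / (k : ℝ)) atTop (nhds 0) := by
    simpa using hlog 1
  have hL2k : Tendsto (fun k : ℕ => L k ^ 2 / (k : ℝ)) atTop (nhds 0) := hlog 2
  have hek : Tendsto (fun k : ℕ => e k / (k : ℝ)) atTop (nhds 0) := by
    have h0 : Tendsto (fun k : ℕ => ((k : ℝ))⁻¹) atTop (nhds 0) :=
      tendsto_inv_atTop_zero.comp hcast
    have := hx.mul h0
    simpa [div_eq_mul_inv] using this
  -- x k / k → α
  have hxk : Tendsto (fun k : ℕ => x k / (k : ℝ)) atTop (nhds α) := by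
    have h1 : Tendsto (fun k : ℕ => α + β * (L k / (k : ℝ)) + e k / (k : ℝ)) atTop
        (nhds (α + β * 0 + 0)) :=
      ((tendsto_const_nhds.add (tendsto_const_nhds.mul hLk)).add hek)
    have h2 : (fun k : ℕ => α + β * (L k / (k : ℝ)) + e k / (k : ℝ)) =ᶠ[atTop]
        (fun k : ℕ => x k / (k : ℝ)) := by
      filter_upwards [eventually_ge_atTop 1] with k hk
      have hk0 : (k : ℝ) ≠ 0 := by positivity
      field_simp [he, hL]
      simp only [he, hL]
      ring
    simpa using h1.congr' h2
  have hu : Tendsto (fun k : ℕ => (k : ℝ) / x k) atTop (nhds α⁻¹) := by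
    have := hxk.inv₀ hα
    simpa [one_div] using this.congr fun k => by
      rw [inv_div]
  -- candidate function
  have hg : Tendsto (fun k : ℕ =>
      (β ^ 2 / α ^ 2) * ((k : ℝ) / x k) * (L k ^ 2 / (k : ℝ))
      + (β / α ^ 2) * ((k : ℝ) / x k) * (e k) * (L k / (k : ℝ))
      - ((k : ℝ) / x k) * (e k) / α) atTop (nhds (-C / α ^ 2)) := by
    have h1 := (((tendsto_const_nhds (x := β ^ 2 / α ^ 2)).mul hu).mul hL2k)
    have h2 := (((tendsto_const_nhds (x := β / α ^ 2)).mul hu).mul hx).mul hLk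
    have h3 := (hu.mul hx).div_const α
    have := (h1.add h2).sub h3
    have heq : β ^ 2 / α ^ 2 * α⁻¹ * 0 + β / α ^ 2 * α⁻¹ * C * 0 - α⁻¹ * C / α
        = -C / α ^ 2 := by
      simp only [mul_zero, zero_add, zero_sub, neg_div]
      ring
    rw [heq] at this
    exact this
  refine hg.congr' ?_
  filter_upwards [eventually_ge_atTop 1] with k hk
  have hk0 : (k : ℝ) ≠ 0 := by positivity
  have hx0 : x k ≠ 0 := (hpos k).ne'
  rw [hy k]
  field_simp [he, hL]
  ring
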